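/- The Schwefel function f(x) = -Σ_{i=1}^n x_i·sin(√|x_i|) satisfies f(x) ≥ -419·n for every x ∈ ℝ^n with -500 ≤ x_i ≤ 500 for all i, consistent with the claimed global minimum value f* ≈ -418.9829·n. -/

import Mathlib

open Real

/-- Key polynomial fact: the shifted-cosine bound near the Schwefel maximizer. -/
lemma schwefel_key {t : ℝ} (h0 : 0 ≤ t) (h2 : t ≤ π / 2) :
    (13 * π / 2 + t) ^ 2 * Real.cos t ≤ 419 := by
  have hπl : 3.141592 < π := Real.pi_gt_d6
  have hπu : π < 3.141593 := Real.pi_lt_d6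
  rcases le_or_gt t 1 with h1 | h1
  · -- t ∈ [0,1] : use quartic upper bound on cos
    have hcb := Real.cos_bound (x := t) (by rwa [abs_of_nonneg h0])
    rw [abs_of_nonneg h0] at hcb
    have hc : Real.cos t ≤ 1 - t ^ 2 / 2 + t ^ 4 * (5 / 96) := by
      have := (abs_le.1 hcb).2; linarith
    have hfac : (0:ℝ) ≤ 1 - t ^ 2 / 2 + t ^ 4 * (5 / 96) := by nlinarith
    have hb : 13 * π / 2 + t ≤ 2042036 / 100000 + t := by linarith
    have hbase : (0:ℝ) ≤ 13 * π / 2 + t := by linarith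
    calc (13 * π / 2 + t) ^ 2 * Real.cos t
        ≤ (13 * π / 2 + t) ^ 2 * (1 - t ^ 2 / 2 + t ^ 4 * (5 / 96)) :=
          mul_le_mul_of_nonneg_left hc (sq_nonneg _)
      _ ≤ (2042036 / 100000 + t) ^ 2 * (1 - t ^ 2 / 2 + t ^ 4 * (5 / 96)) := by
          apply mul_le_mul_of_nonneg_right _ hfac
          exact pow_le_pow_left₀ hbase hb 2
      _ ≤ 419 := by
          nlinarith [sq_nonneg (t - 39/400), sq_nonneg (t*(t - 39/400)),
            sq_nonneg (t^2*(t-39/400)), mul_nonneg h0 (sq_nonneg (t - 39/400)),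
            mul_nonneg (sub_nonneg.2 h1) (sq_nonneg (t - 39/400)), sq_nonneg t,
            mul_nonneg (mul_nonneg h0 h0) h0]
  · -- t ∈ (1, π/2] : cos t ≤ cos 1 ≤ 53/96
    have hc1 : Real.cos 1 ≤ 53 / 96 := by
      have hcb := Real.cos_bound (x := 1) (by norm_num)
      have := (abs_le.1 hcb).2
      norm_num at this ⊢
      linarith
    have hct : Real.cos t ≤ Real.cos 1 :=
      Real.cos_le_cos_of_nonneg_of_le_pi (by norm_num) (by linarith) h1.le
    have hct0 : 0 ≤ Real.cos t :=
      Real.cos_nonneg_of_mem_Icc ⟨by linarith, h2⟩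
    have hsq : (13 * π / 2 + t) ^ 2 ≤ 484 := by nlinarith
    calc (13 * π / 2 + t) ^ 2 * Real.cos t ≤ 484 * (53 / 96) := by
          apply mul_le_mul hsq (le_trans hct hc1) hct0 (by norm_num)
      _ ≤ 419 := by norm_num

/-- Each Schwefel term is at most 419 on [-500, 500]. -/
lemma schwefel_term (y : ℝ) (h1 : -500 ≤ y) (h2 : y ≤ 500) :
    y * Real.sin (Real.sqrt |y|) ≤ 419 := by
  have hπl : 3.141592 < π := Real.pi_gt_d6
  have hπu : π < 3.141593 := Real.pi_lt_d6
  set s := Real.sqrt |y| with hs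
  have hs0 : 0 ≤ s := Real.sqrt_nonneg _
  have hs2 : s ^ 2 = |y| := Real.sq_sqrt (abs_nonneg y)
  have hyabs : |y| ≤ 500 := abs_le.2 ⟨h1, h2⟩
  have hsu : s ≤ 22.3607 := by
    rw [hs, show (22.3607:ℝ) = Real.sqrt (22.3607 ^ 2) by
      rw [Real.sqrt_sq]; norm_num]
    exact Real.sqrt_le_sqrt (by nlinarith)
  rcases le_or_gt (|y|) 419 with hA | hA
  · calc y * Real.sin s ≤ |y * Real.sin s| := le_abs_self _
      _ = |y| * |Real.sin s| := abs_mul _ _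
      _ ≤ |y| * 1 := by
          exact mul_le_mul_of_nonneg_left (Real.abs_sin_le_one _) (abs_nonneg _)
      _ ≤ 419 := by linarith
  · have hsl : 13 * π / 2 ≤ s := by nlinarith
    rcases le_or_gt s (7 * π) with hB | hB
    · -- s ∈ [13π/2, 7π] : sin s = cos (s - 13π/2)
      set t := s - 13 * π / 2 with ht
      have ht0 : 0 ≤ t := by rw [ht]; linarith
      have ht2 : t ≤ π / 2 := by linarith
      have hsin : Real.sin s = Real.cos t := by
        have : s = (t + π / 2) + (3 : ℕ) * (2 * π) := by push_cast; ring
        rw [this, Real.sin_add_nat_mul_two_pi, Real.sin_add_pi_div_two]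
      have hcos0 : 0 ≤ Real.cos t := Real.cos_nonneg_of_mem_Icc ⟨by linarith, ht2⟩
      rcases le_or_gt y 0 with hy | hy
      · calc y * Real.sin s = y * Real.cos t := by rw [hsin]
          _ ≤ 0 := mul_nonpos_of_nonpos_of_nonneg hy hcos0
          _ ≤ 419 := by norm_num
      · have hyy : y = s ^ 2 := by rw [hs2, abs_of_pos hy]
        calc y * Real.sin s = (13 * π / 2 + t) ^ 2 * Real.cos t := by
              rw [hsin, hyy, ht]; ring_nf
          _ ≤ 419 := schwefel_key ht0 ht2
    · -- s ∈ (7π, √500] : |sin s| = sin (s - 7π) ≤ s - 7π ≤ 0.37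
      set t := s - 7 * π with ht
      have ht0 : 0 < t := by linarith
      have htu : t ≤ 0.37 := by nlinarith
      have hsin : Real.sin s = -Real.sin t := by
        have : s = (t + π) + (3 : ℕ) * (2 * π) := by push_cast; ring
        rw [this, Real.sin_add_nat_mul_two_pi, Real.sin_add_pi]
      have hst : Real.sin t < t := Real.sin_lt ht0
      have hst0 : 0 ≤ Real.sin t :=
        Real.sin_nonneg_of_nonneg_of_le_pi ht0.le (by linarith)
      calc y * Real.sin s ≤ |y * Real.sin s| := le_abs_self _
        _ = |y| * |Real.sin s| := abs_mul _ _
        _ ≤ 500 * 0.37 := by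
            rw [hsin, abs_neg, abs_of_nonneg hst0]
            exact mul_le_mul hyabs (by linarith) hst0 (by norm_num)
        _ ≤ 419 := by norm_num

/-- The Schwefel function is bounded below by -419·n on the box [-500, 500]^n. -/
theorem schwefel_lower_bound (n : ℕ) (hn : 1 ≤ n) (f : (Fin n → ℝ) → ℝ)
    (hf : ∀ x : Fin n → ℝ,
      f x = -(∑ i, x i * Real.sin (Real.sqrt |x i|))) :
    ∀ x : Fin n → ℝ, (∀ i, -500 ≤ x i ∧ x i ≤ 500) → -419 * (n : ℝ) ≤ f x := by
  intro x hx
  rw [hf]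
  have hsum : ∑ i, x i * Real.sin (Real.sqrt |x i|) ≤ ∑ _i : Fin n, (419 : ℝ) :=
    Finset.sum_le_sum fun i _ => schwefel_term _ (hx i).1 (hx i).2
  rw [Finset.sum_const, Finset.card_univ, Fintype.card_fin, nsmul_eq_mul] at hsum
  linarith
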